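/- Let A be an abelian group and suppose that for every integer n ≥ 1 there are additive endomorphisms F_n, V_n : A → A such that F_n ∘ V_n = n · id_A for all n ≥ 1, and such that for every x ∈ A there exists an integer N with F_m(x) = 0 for all m ≥ N. Then for every prime p, if the p-primary torsion subgroup {x ∈ A : p^k · x = 0 for some k ≥ 0} of A is finitely generated as an abelian group, then it is trivial. -/
import Mathlib


/-- The p-primary part of Farrell's trick (Theorem 1.1): under the same
Frobenius/Verschiebung hypotheses, the p-primary torsion subgroup
`{x : A | ∃ k, p ^ k • x = 0}` is trivial whenever it is finitely generated. -/
theorem stmt_1 (A : Type*) [AddCommGroup A] (F V : ℕ → A →+ A)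
    (hFV : ∀ n : ℕ, 1 ≤ n → ∀ x : A, F n (V n x) = n • x)
    (hvan : ∀ x : A, ∃ N : ℕ, ∀ m : ℕ, N ≤ m → F m x = 0)
    (p : ℕ) (hp : p.Prime)
    (T : AddSubgroup A) (hT : ∀ x : A, x ∈ T ↔ ∃ k : ℕ, p ^ k • x = 0)
    (hfg : T.FG) :
    ∀ x ∈ T, x = 0 := by
  intro x hx
  have hfgT : AddGroup.FG T := (AddGroup.fg_iff_addSubgroup_fg T).2 hfg
  have htors : AddMonoid.IsTorsion T := by
    intro t
    obtain ⟨k, hk⟩ := (hT t).1 t.2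
    refine isOfFinAddOrder_iff_nsmul_eq_zero.2 ⟨p ^ k, pow_pos hp.pos k, ?_⟩
    exact Subtype.ext (by simpa using hk)
  have hfin : Finite T := AddCommGroup.finite_of_fg_torsion T htors
  have := Fintype.ofFinite T
  -- uniform vanishing bound
  choose g hg using hvan
  set N : ℕ := Finset.univ.sup (fun t : T => g (t : A)) with hN
  -- uniform exponent
  choose e he using fun t : T => (hT t).1 t.2
  set k : ℕ := Finset.univ.sup e with hk
  have hexp : ∀ t : T, p ^ k • (t : A) = 0 := by
    intro t
    have hle : e t ≤ k := Finset.le_sup (Finset.mem_univ t)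
    calc p ^ k • (t : A) = p ^ (k - e t + e t) • (t : A) := by rw [Nat.sub_add_cancel hle]
    _ = p ^ (k - e t) • (p ^ (e t) • (t : A)) := by rw [pow_add, mul_smul]
    _ = 0 := by rw [he t, smul_zero]
  set n : ℕ := 1 + N * p ^ k with hn
  have hn1 : 1 ≤ n := Nat.le_add_right 1 _
  have hnN : N ≤ n := by
    have : N ≤ N * p ^ k := Nat.le_mul_of_pos_right N (pow_pos hp.pos k)
    omega
  -- V n x is in T
  have hVx : V n x ∈ T := by
    rw [hT]
    exact ⟨k, by rw [← map_nsmul, hexp ⟨x, hx⟩, map_zero]⟩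
  have h0 : F n (V n x) = 0 := by
    have hle : g (V n x) ≤ N := by
      have := Finset.le_sup (f := fun t : T => g (t : A)) (Finset.mem_univ (⟨V n x, hVx⟩ : T))
      simpa using this
    exact hg (V n x) n (le_trans hle hnN)
  have h1 : F n (V n x) = x := by
    rw [hFV n hn1 x, hn, add_smul, one_smul, mul_smul, hexp ⟨x, hx⟩, smul_zero, add_zero]
  rw [h0] at h1
  exact h1.symm
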